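/- Let R be a real d×N matrix and λ > 0. Define c^λ = (RᵀR + λ||R||²₂ I)^{-1} 1_N / (1_Nᵀ (RᵀR + λ||R||²₂ I)^{-1} 1_N). Then ||c^λ||_2 ≤ (1/√N) · sqrt(1 + 1/λ). -/

import Mathlib

open Matrix
open scoped Matrix.Norms.L2Operator

/-- Euclidean (ℓ₂) norm of a real vector. -/
noncomputable def vnorm {ι : Type*} [Fintype ι] (v : ι → ℝ) : ℝ :=
  ‖(show EuclideanSpace ℝ ι from WithLp.toLp 2 v)‖

lemma vnorm_sq {ι : Type*} [Fintype ι] (v : ι → ℝ) : vnorm v ^ 2 = v ⬝ᵥ v := by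
  have h : vnorm v = Real.sqrt (∑ i, ‖v i‖ ^ 2) := EuclideanSpace.norm_eq (WithLp.toLp 2 v)
  rw [h, Real.sq_sqrt (by positivity)]
  simp [dotProduct, Real.norm_eq_abs, sq_abs, pow_two]

lemma vnorm_nonneg {ι : Type*} [Fintype ι] (v : ι → ℝ) : 0 ≤ vnorm v := norm_nonneg _

/-- For a real `d×N` matrix `R` and `λ > 0`, the regularized
RNA coefficients `c^λ = (RᵀR + λ‖R‖₂² I)⁻¹ 1 / (1ᵀ (RᵀR + λ‖R‖₂² I)⁻¹ 1)`
satisfy `‖c^λ‖₂ ≤ (1/√N) √(1 + 1/λ)`. -/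
theorem rna_coefficients_norm_bound
    (d N : ℕ) (hN : 0 < N) (R : Matrix (Fin d) (Fin N) ℝ)
    (lam : ℝ) (hlam : 0 < lam)
    (M : Matrix (Fin N) (Fin N) ℝ)
    (hM : M = Rᵀ * R + (lam * ‖R‖ ^ 2) • (1 : Matrix (Fin N) (Fin N) ℝ))
    (c : Fin N → ℝ)
    (hc : c = (((fun _ => 1 : Fin N → ℝ) ⬝ᵥ M⁻¹.mulVec (fun _ => 1))⁻¹) •
      M⁻¹.mulVec (fun _ => 1)) :
    vnorm c ≤ (1 / Real.sqrt N) * Real.sqrt (1 + 1 / lam) := by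
  have hNR : 0 ≤ (1 / Real.sqrt N) * Real.sqrt (1 + 1 / lam) := by positivity
  by_cases hR : R = (0 : Matrix (Fin d) (Fin N) ℝ)
  · subst hR
    simp only [norm_zero, transpose_zero, Matrix.zero_mul, ne_eq, OfNat.ofNat_ne_zero,
      not_false_eq_true, zero_pow, mul_zero, zero_smul, add_zero, zero_add] at hM
    rw [hM, Matrix.inv_zero, Matrix.zero_mulVec, smul_zero] at hc
    have : vnorm c = 0 := by
      rw [hc]
      simpa [vnorm] using (norm_zero : ‖(0 : EuclideanSpace ℝ (Fin N))‖ = 0)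
    rw [this]; exact hNR
  -- main case
  have hRn : 0 < ‖R‖ := norm_pos_iff.mpr hR
  set μ : ℝ := lam * ‖R‖ ^ 2 with hμdef
  have hμpos : 0 < μ := by positivity
  set o : Fin N → ℝ := (fun _ => 1) with ho
  have hNr : 0 < (N : ℝ) := by exact_mod_cast hN
  have hoo : o ⬝ᵥ o = (N : ℝ) := by simp [ho, dotProduct]
  have honz : o ≠ 0 := by
    intro h
    have : (1 : ℝ) = 0 := congrFun h ⟨0, hN⟩
    norm_num at this
  -- positive definiteness
  have hRtR : (Rᵀ * R).PosSemidef := by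
    simpa using Matrix.posSemidef_conjTranspose_mul_self R
  have hId : (μ • (1 : Matrix (Fin N) (Fin N) ℝ)).PosDef := by
    rw [Matrix.smul_one_eq_diagonal]
    exact Matrix.posDef_diagonal_iff.mpr fun _ => hμpos
  have hMpd : M.PosDef := by
    rw [hM]; exact Matrix.PosDef.posSemidef_add hRtR hId
  have hsymm : Mᵀ = M := by
    rw [hM]
    simp [Matrix.transpose_add, Matrix.transpose_mul, Matrix.transpose_smul]
  have hswap : ∀ x y : Fin N → ℝ, x ⬝ᵥ M *ᵥ y = y ⬝ᵥ M *ᵥ x := by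
    intro x y
    conv_lhs => rw [← hsymm]
    rw [Matrix.mulVec_transpose, dotProduct_comm, ← Matrix.dotProduct_mulVec]
  have hdet : IsUnit M.det := isUnit_iff_ne_zero.mpr hMpd.det_pos.ne'
  have hMMinv : M * M⁻¹ = 1 := M.mul_nonsing_inv hdet
  set u : Fin N → ℝ := M⁻¹ *ᵥ o with hu
  have hMu : M *ᵥ u = o := by
    rw [hu, Matrix.mulVec_mulVec, hMMinv, Matrix.one_mulVec]
  set s : ℝ := o ⬝ᵥ u with hs
  have hspos : 0 < s := by
    have := (hMpd.inv).dotProduct_mulVec_pos honz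
    simpa [hs, hu] using this
  -- key dot products
  have hou : o ⬝ᵥ M *ᵥ u = (N : ℝ) := by rw [hMu, hoo]
  have huo : u ⬝ᵥ M *ᵥ o = (N : ℝ) := by rw [hswap, hou]
  have huu : u ⬝ᵥ M *ᵥ u = s := by rw [hMu, dotProduct_comm, hs]
  set a : ℝ := o ⬝ᵥ M *ᵥ o with ha
  -- Cauchy-Schwarz: N^2 ≤ a * s
  have hcs : (N : ℝ) ^ 2 ≤ a * s := by
    set t : ℝ := (N : ℝ) / s with ht
    have hq : 0 ≤ (o - t • u) ⬝ᵥ M *ᵥ (o - t • u) := by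
      have := hMpd.posSemidef.dotProduct_mulVec_nonneg (o - t • u)
      simpa using this
    have hexp : (o - t • u) ⬝ᵥ M *ᵥ (o - t • u)
        = a - t * (N : ℝ) - t * (N : ℝ) + t * t * s := by
      rw [Matrix.mulVec_sub, Matrix.mulVec_smul]
      simp only [sub_dotProduct, dotProduct_sub, smul_dotProduct,
        dotProduct_smul, smul_eq_mul, hou, huo, huu]
      rw [← ha]
      ring
    rw [hexp, ht] at hq
    have h2 : 0 ≤ a - (N : ℝ) ^ 2 / s := by
      have : a - (N : ℝ) / s * (N : ℝ) - (N : ℝ) / s * (N : ℝ)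
          + (N : ℝ) / s * ((N : ℝ) / s) * s = a - (N : ℝ) ^ 2 / s := by
        field_simp; ring
      linarith [hq, this.symm ▸ hq, this ▸ hq]
    have := (div_le_iff₀ hspos).mp (by linarith : (N : ℝ) ^ 2 / s ≤ a)
    linarith
  -- bound a ≤ (1+lam) * ‖R‖^2 * N
  have hbound : a ≤ (1 + lam) * ‖R‖ ^ 2 * (N : ℝ) := by
    have hMo : M *ᵥ o = Rᵀ *ᵥ (R *ᵥ o) + μ • o := by
      rw [hM, Matrix.add_mulVec, Matrix.smul_mulVec, Matrix.one_mulVec,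
        ← Matrix.mulVec_mulVec]
    have hsplit : a = (R *ᵥ o) ⬝ᵥ (R *ᵥ o) + μ * (N : ℝ) := by
      rw [ha, hMo, dotProduct_add, dotProduct_smul, smul_eq_mul, hoo,
        Matrix.dotProduct_mulVec, Matrix.vecMul_transpose]
    have hvn : vnorm o = Real.sqrt N := by
      have h2 : vnorm o ^ 2 = (N : ℝ) := by rw [vnorm_sq, hoo]
      rw [← h2, Real.sqrt_sq (vnorm_nonneg o)]
    have hop : vnorm (R *ᵥ o) ≤ ‖R‖ * Real.sqrt N := by
      have h := Matrix.l2_opNorm_mulVec R (show EuclideanSpace ℝ (Fin N) from WithLp.toLp 2 o)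
      calc vnorm (R *ᵥ o) = ‖(EuclideanSpace.equiv (Fin d) ℝ).symm (R *ᵥ o)‖ := rfl
        _ ≤ ‖R‖ * ‖(show EuclideanSpace ℝ (Fin N) from WithLp.toLp 2 o)‖ := h
        _ = ‖R‖ * vnorm o := rfl
        _ = ‖R‖ * Real.sqrt N := by rw [hvn]
    have hRo : (R *ᵥ o) ⬝ᵥ (R *ᵥ o) ≤ ‖R‖ ^ 2 * (N : ℝ) := by
      rw [← vnorm_sq]
      calc vnorm (R *ᵥ o) ^ 2 ≤ (‖R‖ * Real.sqrt N) ^ 2 := by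
            apply pow_le_pow_left₀ (vnorm_nonneg _) hop
        _ = ‖R‖ ^ 2 * (N : ℝ) := by
            rw [mul_pow, Real.sq_sqrt (Nat.cast_nonneg N)]
    rw [hsplit, hμdef]
    nlinarith [hRo]
  -- energy of c
  have hcMc : c ⬝ᵥ M *ᵥ c = s⁻¹ := by
    rw [hc]
    simp only [← ho, ← hu, ← hs, smul_dotProduct, Matrix.mulVec_smul,
      dotProduct_smul, smul_eq_mul, huu]
    field_simp
  have hμc : μ * (c ⬝ᵥ c) ≤ c ⬝ᵥ M *ᵥ c := by
    have hMc : M *ᵥ c = Rᵀ *ᵥ (R *ᵥ c) + μ • c := by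
      rw [hM, Matrix.add_mulVec, Matrix.smul_mulVec, Matrix.one_mulVec,
        ← Matrix.mulVec_mulVec]
    have hRc : 0 ≤ (R *ᵥ c) ⬝ᵥ (R *ᵥ c) := by
      rw [← vnorm_sq]; positivity
    rw [hMc, dotProduct_add, dotProduct_smul, smul_eq_mul,
      Matrix.dotProduct_mulVec, Matrix.vecMul_transpose]
    linarith
  -- combine
  have h1 : vnorm c ^ 2 ≤ 1 / (μ * s) := by
    rw [vnorm_sq]
    rw [le_div_iff₀ (by positivity)]
    have : c ⬝ᵥ c * (μ * s) = (μ * (c ⬝ᵥ c)) * s := by ring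
    rw [this]
    calc (μ * (c ⬝ᵥ c)) * s ≤ s⁻¹ * s := by
          apply mul_le_mul_of_nonneg_right (hcMc ▸ hμc) hspos.le
      _ = 1 := inv_mul_cancel₀ hspos.ne'
  have hkey : (N : ℝ) ≤ (1 + lam) * ‖R‖ ^ 2 * s := by
    nlinarith [mul_le_mul_of_nonneg_right hbound hspos.le, hcs, hNr]
  have h2 : 1 / (μ * s) ≤ (1 / (N : ℝ)) * (1 + 1 / lam) := by
    rw [div_le_iff₀ (by positivity : (0:ℝ) < μ * s)]
    have heq : (1 / (N : ℝ)) * (1 + 1 / lam) * (μ * s) = ((1 + lam) * ‖R‖ ^ 2 * s) / (N : ℝ) := by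
      rw [hμdef]; field_simp; ring
    rw [heq, le_div_iff₀ hNr, one_mul]
    exact hkey
  have hfin : vnorm c ^ 2 ≤ ((1 / Real.sqrt N) * Real.sqrt (1 + 1 / lam)) ^ 2 := by
    have hrhs : ((1 / Real.sqrt N) * Real.sqrt (1 + 1 / lam)) ^ 2
        = (1 / (N : ℝ)) * (1 + 1 / lam) := by
      rw [mul_pow, div_pow, one_pow, Real.sq_sqrt (Nat.cast_nonneg N),
        Real.sq_sqrt (by positivity : (0:ℝ) ≤ 1 + 1 / lam)]
    rw [hrhs]
    linarith
  have := Real.sqrt_le_sqrt hfin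
  rwa [Real.sqrt_sq (vnorm_nonneg c), Real.sqrt_sq hNR] at this
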